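/- Let F : (0,∞) → ℝ be differentiable with σ_F(x) := sup_{y ≥ x} |F(y)| finite for all x > 0 and |F'| integrable; set σ_{1F}(x) := ∫_x^∞ σ_F(y) dy and σ_{2F}(x) := ∫_x^∞ |F'(y)| dy. Let 0 ≤ δ < 1 and x ≥ 0 with σ_{1F}(2x) ≤ δ. Suppose A(x,·) is bounded, satisfies the Marchenko equation A(x,y) + ∫_x^∞ A(x,t) F(t+y) dt = −F(x+y) for y ≥ x, and a function A_x(x,·) ∈ L¹(x,∞) satisfies the differentiated equation A_x(x,y) + ∫_x^∞ A_x(x,t) F(t+y) dt = A(x,x) F(x+y) − F'(x+y) for y ≥ x. Then ∫_x^∞ |A_x(x,y)| dy ≤ (1−δ)^{-1} [ σ_{2F}(2x) + (1−δ)^{-1} σ_F(2x) σ_{1F}(2x) ]. -/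

import Mathlib

open MeasureTheory Set Filter

/-- `σ_F(x) := sup_{y ≥ x} |F(y)|`. -/
noncomputable def sigmaF (F : ℝ → ℝ) (x : ℝ) : ℝ :=
  sSup ((fun y => |F y|) '' Set.Ici x)

private lemma cov_integral (g : ℝ → ℝ) (c a : ℝ) :
    (∫ y in Set.Ioi a, g (c + y)) = ∫ u in Set.Ioi (c + a), g u := by
  have he : MeasurableEmbedding (fun y : ℝ => c + y) :=
    (Homeomorph.addLeft c).measurableEmbedding
  have hmap : Measure.map (fun y : ℝ => c + y) volume = volume :=
    map_add_left_eq_self volume c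
  conv_rhs => rw [← hmap]
  rw [he.setIntegral_map]
  congr 1
  ext y
  simp [Set.mem_preimage, add_lt_add_iff_left]

private lemma cov_integrableOn (g : ℝ → ℝ) (c a : ℝ)
    (h : IntegrableOn g (Set.Ioi (c + a))) :
    IntegrableOn (fun y => g (c + y)) (Set.Ioi a) := by
  have he : MeasurableEmbedding (fun y : ℝ => c + y) :=
    (Homeomorph.addLeft c).measurableEmbedding
  have hmap : Measure.map (fun y : ℝ => c + y) volume = volume :=
    map_add_left_eq_self volume c
  rw [← hmap, he.integrableOn_map_iff] at h
  convert h using 1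
  · rfl
  · ext y
    simp [add_lt_add_iff_left]
  · ext y
    simp [add_lt_add_iff_left]

private lemma cov_integralR (g : ℝ → ℝ) (c a : ℝ) :
    (∫ y in Set.Ioi a, g (y + c)) = ∫ u in Set.Ioi (a + c), g u := by
  have h1 : (∫ y in Set.Ioi a, g (y + c)) = ∫ y in Set.Ioi a, g (c + y) := by
    congr 1; funext y; rw [add_comm]
  rw [h1, cov_integral g c a, add_comm]

private lemma cov_integrableOnR (g : ℝ → ℝ) (c a : ℝ)
    (h : IntegrableOn g (Set.Ioi (a + c))) :
    IntegrableOn (fun y => g (y + c)) (Set.Ioi a) := by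
  rw [add_comm] at h
  have := cov_integrableOn g c a h
  convert this using 1
  funext y; rw [add_comm]

/-- bound on the `L¹` norm of the `x`-derivative of the Marchenko kernel:
`∫_x^∞ |A_x(x,y)| dy ≤ (1−δ)⁻¹ [σ_{2F}(2x) + (1−δ)⁻¹ σ_F(2x) σ_{1F}(2x)]`. -/
theorem marchenko_Ax_L1_bound
    (F F' : ℝ → ℝ) (hFderiv : ∀ y > (0 : ℝ), HasDerivAt F (F' y) y)
    (hFmeas : Measurable F)
    (hFbdd : ∀ x > (0 : ℝ), BddAbove ((fun y => |F y|) '' Set.Ici x))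
    (hF'int : IntegrableOn (fun y => |F' y|) (Set.Ioi 0))
    (δ : ℝ) (hδ0 : 0 ≤ δ) (hδ1 : δ < 1)
    (x : ℝ) (hx : 0 ≤ x)
    (hσint : IntegrableOn (sigmaF F) (Set.Ioi (2 * x)))
    (hsmall : (∫ y in Set.Ioi (2 * x), sigmaF F y) ≤ δ)
    (A Ax : ℝ → ℝ) (hAmeas : Measurable A)
    (hAbdd : BddAbove ((fun y => |A y|) '' Set.Ici x))
    (heq : ∀ y ≥ x, A y + ∫ t in Set.Ioi x, A t * F (t + y) = -F (x + y))
    (hAxint : IntegrableOn Ax (Set.Ioi x))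
    (heq' : ∀ y ≥ x, Ax y + ∫ t in Set.Ioi x, Ax t * F (t + y)
      = A x * F (x + y) - F' (x + y)) :
    (∫ y in Set.Ioi x, |Ax y|) ≤
      (1 - δ)⁻¹ * ((∫ y in Set.Ioi (2 * x), |F' y|) +
        (1 - δ)⁻¹ * sigmaF F (2 * x) * (∫ y in Set.Ioi (2 * x), sigmaF F y)) := by
  have hD : (0:ℝ) < 1 - δ := by linarith
  have hx2 : (0:ℝ) ≤ 2 * x := by linarith
  -- basic facts about σ_F
  have hFle : ∀ v : ℝ, 0 < v → |F v| ≤ sigmaF F v := fun v hv =>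
    le_csSup (hFbdd v hv) ⟨v, Set.self_mem_Ici, rfl⟩
  have hσnonneg : ∀ v : ℝ, 0 < v → 0 ≤ sigmaF F v := fun v hv =>
    (abs_nonneg _).trans (hFle v hv)
  have hσmono : ∀ u v : ℝ, 0 < u → u ≤ v → sigmaF F v ≤ sigmaF F u := by
    intro u v hu huv
    exact csSup_le_csSup (hFbdd u hu) ⟨|F v|, ⟨v, Set.self_mem_Ici, rfl⟩⟩
      (Set.image_mono (Set.Ici_subset_Ici.2 huv))
  have hσint' : ∀ b : ℝ, 2 * x ≤ b → IntegrableOn (sigmaF F) (Set.Ioi b) :=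
    fun b hb => hσint.mono_set (Set.Ioi_subset_Ioi hb)
  have hσ1nonneg : 0 ≤ ∫ y in Set.Ioi (2 * x), sigmaF F y :=
    setIntegral_nonneg measurableSet_Ioi fun v hv =>
      hσnonneg v (lt_of_le_of_lt hx2 hv)
  -- |F| is integrable on each tail `Ioi b`, `b ≥ 2x`, with integral at most `σ1 ≤ δ`
  have key1 : ∀ b : ℝ, 2 * x ≤ b →
      IntegrableOn (fun v => |F v|) (Set.Ioi b) ∧
        (∫ v in Set.Ioi b, |F v|) ≤ ∫ y in Set.Ioi (2 * x), sigmaF F y := by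
    intro b hb
    have hle : ∀ v ∈ Set.Ioi b, |F v| ≤ sigmaF F v := fun v hv =>
      hFle v (lt_of_le_of_lt (le_trans hx2 hb) hv)
    have hint : IntegrableOn (fun v => |F v|) (Set.Ioi b) := by
      refine Integrable.mono (hσint' b hb) hFmeas.abs.aestronglyMeasurable ?_
      refine (ae_restrict_iff' measurableSet_Ioi).2 (Filter.Eventually.of_forall ?_)
      intro v hv
      rw [Real.norm_eq_abs, Real.norm_eq_abs, abs_abs]
      exact (hle v hv).trans (le_abs_self _)
    refine ⟨hint, ?_⟩
    calc (∫ v in Set.Ioi b, |F v|) ≤ ∫ v in Set.Ioi b, sigmaF F v :=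
          setIntegral_mono_on hint (hσint' b hb) measurableSet_Ioi hle
      _ ≤ ∫ y in Set.Ioi (2 * x), sigmaF F y := by
          refine setIntegral_mono_set hσint ?_ ?_
          · filter_upwards [ae_restrict_mem measurableSet_Ioi] with v hv using
              hσnonneg v (lt_of_le_of_lt hx2 hv)
          · exact HasSubset.Subset.eventuallyLE (Set.Ioi_subset_Ioi hb)
  -- left-translate version: `∫_{y>x} |F (c+y)| dy ≤ δ` for `c ≥ x`
  have key2L : ∀ c : ℝ, x ≤ c →
      IntegrableOn (fun y => |F (c + y)|) (Set.Ioi x) ∧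
        (∫ y in Set.Ioi x, |F (c + y)|) ≤ δ := by
    intro c hc
    have hb : 2 * x ≤ c + x := by linarith
    refine ⟨cov_integrableOn (fun v => |F v|) c x (key1 _ hb).1, ?_⟩
    have hcov : (∫ y in Set.Ioi x, |F (c + y)|) = ∫ v in Set.Ioi (c + x), |F v| :=
      cov_integral (fun v => |F v|) c x
    rw [hcov]
    exact le_trans (key1 _ hb).2 hsmall
  -- right-translate version: `∫_{t>x} |F (t+y)| dt ≤ δ` for `y ≥ x`
  have key2R : ∀ c : ℝ, x ≤ c →
      IntegrableOn (fun t => |F (t + c)|) (Set.Ioi x) ∧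
        (∫ t in Set.Ioi x, |F (t + c)|) ≤ δ := by
    intro c hc
    have hb : 2 * x ≤ x + c := by linarith
    refine ⟨cov_integrableOnR (fun v => |F v|) c x (key1 _ hb).1, ?_⟩
    have hcov : (∫ t in Set.Ioi x, |F (t + c)|) = ∫ v in Set.Ioi (x + c), |F v| :=
      cov_integralR (fun v => |F v|) c x
    rw [hcov]
    exact le_trans (key1 _ hb).2 hsmall
  -- bound for `A` and the `A`-integrals
  set MA := sSup ((fun y => |A y|) '' Set.Ici x) with hMA_def
  have hMA : ∀ y : ℝ, x ≤ y → |A y| ≤ MA := fun y hy => le_csSup hAbdd ⟨y, hy, rfl⟩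
  have hMA0 : 0 ≤ MA := (abs_nonneg _).trans (hMA x le_rfl)
  have keyA : ∀ y : ℝ, x ≤ y →
      |∫ t in Set.Ioi x, A t * F (t + y)| ≤ MA * δ := by
    intro y hy
    have hFy := key2R y hy
    have haesm : AEStronglyMeasurable (fun t => A t * F (t + y))
        (volume.restrict (Set.Ioi x)) :=
      (hAmeas.mul (hFmeas.comp (measurable_add_const y))).aestronglyMeasurable
    have habs_int : IntegrableOn (fun t => |A t| * |F (t + y)|) (Set.Ioi x) := by
      refine Integrable.mono (hFy.1.const_mul MA) (haesm.norm.congr ?_) ?_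
      · refine Filter.Eventually.of_forall fun t => ?_
        simp [Real.norm_eq_abs, abs_mul]
      refine (ae_restrict_iff' measurableSet_Ioi).2 (Filter.Eventually.of_forall ?_)
      intro t ht
      rw [Real.norm_eq_abs, Real.norm_eq_abs, abs_mul, abs_abs, abs_abs]
      exact le_trans (mul_le_mul_of_nonneg_right (hMA t ht.le) (abs_nonneg _))
        (le_abs_self _)
    calc |∫ t in Set.Ioi x, A t * F (t + y)|
        ≤ ∫ t in Set.Ioi x, |A t| * |F (t + y)| := by
          simpa [Real.norm_eq_abs, abs_mul] using
            norm_integral_le_integral_norm (μ := volume.restrict (Set.Ioi x))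
              (fun t => A t * F (t + y))
      _ ≤ ∫ t in Set.Ioi x, MA * |F (t + y)| := by
          refine setIntegral_mono_on habs_int (hFy.1.const_mul MA)
            measurableSet_Ioi ?_
          intro t ht
          exact mul_le_mul_of_nonneg_right (hMA t ht.le) (abs_nonneg _)
      _ = MA * ∫ t in Set.Ioi x, |F (t + y)| := integral_const_mul _ _
      _ ≤ MA * δ := mul_le_mul_of_nonneg_left hFy.2 hMA0
  -- `F` is bounded on `Ici (2x)` (this follows from the Marchenko equation itself,
  -- which matters in the degenerate case `x = 0`)
  have hFbd2 : ∀ u : ℝ, 2 * x ≤ u → |F u| ≤ MA + MA * δ := by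
    intro u hu
    have hy : x ≤ u - x := by linarith
    have h := heq (u - x) hy
    have hxy : x + (u - x) = u := by ring
    rw [hxy] at h
    have hFu : F u = -(A (u - x) + ∫ t in Set.Ioi x, A t * F (t + (u - x))) := by
      linarith
    rw [hFu, abs_neg]
    exact (abs_add_le _ _).trans (add_le_add (hMA _ hy) (keyA _ hy))
  have hbdd2x : BddAbove ((fun y => |F y|) '' Set.Ici (2 * x)) := by
    refine ⟨MA + MA * δ, ?_⟩
    rintro _ ⟨u, hu, rfl⟩
    exact hFbd2 u hu
  have hFle2 : ∀ u : ℝ, 2 * x ≤ u → |F u| ≤ sigmaF F (2 * x) := fun u hu =>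
    le_csSup hbdd2x ⟨u, hu, rfl⟩
  have hσ2nonneg : 0 ≤ sigmaF F (2 * x) :=
    (abs_nonneg _).trans (hFle2 (2 * x) le_rfl)
  -- bound `MA ≤ (1-δ)⁻¹ σ_F(2x)`
  have hMA_le : MA ≤ sigmaF F (2 * x) + MA * δ := by
    refine csSup_le ⟨|A x|, ⟨x, Set.self_mem_Ici, rfl⟩⟩ ?_
    rintro _ ⟨y, hy, rfl⟩
    show |A y| ≤ sigmaF F (2 * x) + MA * δ
    have hy' : x ≤ y := hy
    have h := heq y hy
    have hAy : A y = -(F (x + y) + ∫ t in Set.Ioi x, A t * F (t + y)) := by linarith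
    rw [hAy, abs_neg]
    exact (abs_add_le _ _).trans
      (add_le_add (hFle2 _ (by linarith)) (keyA y hy'))
  have hMA_final : MA ≤ (1 - δ)⁻¹ * sigmaF F (2 * x) := by
    rw [inv_mul_eq_div, le_div_iff₀ hD]
    nlinarith [hMA_le]
  -- the two-variable kernel for the Fubini argument
  set g : ℝ × ℝ → ℝ := fun p => |Ax p.1 * F (p.1 + p.2)| with hg_def
  have hAx_aesm : AEStronglyMeasurable Ax (volume.restrict (Set.Ioi x)) :=
    hAxint.aestronglyMeasurable
  have hg_aesm : AEStronglyMeasurable g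
      ((volume.restrict (Set.Ioi x)).prod (volume.restrict (Set.Ioi x))) := by
    have h1 : AEStronglyMeasurable (fun p : ℝ × ℝ => Ax p.1)
        ((volume.restrict (Set.Ioi x)).prod (volume.restrict (Set.Ioi x))) :=
      hAx_aesm.comp_quasiMeasurePreserving Measure.quasiMeasurePreserving_fst
    have h2 : AEStronglyMeasurable (fun p : ℝ × ℝ => F (p.1 + p.2))
        ((volume.restrict (Set.Ioi x)).prod (volume.restrict (Set.Ioi x))) :=
      (hFmeas.comp (measurable_fst.add measurable_snd)).aestronglyMeasurable
    exact (h1.mul h2).norm.congr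
      (Filter.Eventually.of_forall fun p => by simp [hg_def, Real.norm_eq_abs, abs_mul])
  -- slices in the second variable
  have hslice : ∀ t : ℝ, x ≤ t →
      Integrable (fun y => g (t, y)) (volume.restrict (Set.Ioi x)) := by
    intro t ht
    have hgy : (fun y => g (t, y)) = fun y => |Ax t| * |F (t + y)| := by
      funext y; simp [hg_def, abs_mul]
    rw [hgy]
    exact (key2L t ht).1.const_mul _
  have hslice_val : ∀ t : ℝ, x ≤ t →
      (∫ y in Set.Ioi x, g (t, y)) ≤ |Ax t| * δ := by
    intro t ht
    have hgy : (fun y => g (t, y)) = fun y => |Ax t| * |F (t + y)| := by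
      funext y; simp [hg_def, abs_mul]
    calc (∫ y in Set.Ioi x, g (t, y)) = ∫ y in Set.Ioi x, |Ax t| * |F (t + y)| := by
          rw [hgy]
      _ = |Ax t| * ∫ y in Set.Ioi x, |F (t + y)| := integral_const_mul _ _
      _ ≤ |Ax t| * δ := mul_le_mul_of_nonneg_left (key2L t ht).2 (abs_nonneg _)
  -- the `t`-marginal
  have hmarg_aesm : AEStronglyMeasurable (fun t => ∫ y in Set.Ioi x, g (t, y))
      (volume.restrict (Set.Ioi x)) := hg_aesm.integral_prod_right'
  have hmarg_int : Integrable (fun t => ∫ y in Set.Ioi x, g (t, y))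
      (volume.restrict (Set.Ioi x)) := by
    refine Integrable.mono (hAxint.abs.mul_const δ) hmarg_aesm ?_
    refine (ae_restrict_iff' measurableSet_Ioi).2 (Filter.Eventually.of_forall ?_)
    intro t ht
    have h0 : 0 ≤ ∫ y in Set.Ioi x, g (t, y) :=
      setIntegral_nonneg measurableSet_Ioi fun y _ => abs_nonneg _
    rw [Real.norm_eq_abs, Real.norm_eq_abs, abs_of_nonneg h0]
    exact (hslice_val t ht.le).trans (le_abs_self _)
  -- integrability on the product
  have hg_int : Integrable g
      ((volume.restrict (Set.Ioi x)).prod (volume.restrict (Set.Ioi x))) := by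
    rw [integrable_prod_iff hg_aesm]
    constructor
    · filter_upwards [ae_restrict_mem measurableSet_Ioi] with t ht
      exact hslice t ht.le
    · refine hmarg_int.congr (Filter.Eventually.of_forall fun t => ?_)
      simp only [hg_def, Real.norm_eq_abs, abs_abs]
  have hswap : (∫ t in Set.Ioi x, ∫ y in Set.Ioi x, g (t, y))
      = ∫ y in Set.Ioi x, ∫ t in Set.Ioi x, g (t, y) :=
    integral_integral_swap (f := fun t y => g (t, y)) (by exact hg_int)
  -- pointwise bound on the inner integral in `t`
  have hJ_nonneg : ∀ y : ℝ, 0 ≤ ∫ t in Set.Ioi x, g (t, y) :=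
    fun y => setIntegral_nonneg measurableSet_Ioi fun t _ => abs_nonneg _
  have hJ_le : ∀ y : ℝ, x < y →
      (∫ t in Set.Ioi x, g (t, y))
        ≤ (∫ t in Set.Ioi x, |Ax t|) * sigmaF F (x + y) := by
    intro y hy
    have hxy0 : 0 < x + y := by linarith
    have hpt : ∀ t ∈ Set.Ioi x, g (t, y) ≤ |Ax t| * sigmaF F (x + y) := by
      intro t ht
      have ht' : x < t := ht
      have h1 : |F (t + y)| ≤ sigmaF F (x + y) :=
        (hFle (t + y) (by linarith)).trans
          (hσmono (x + y) (t + y) hxy0 (by linarith))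
      calc g (t, y) = |Ax t| * |F (t + y)| := by simp [hg_def, abs_mul]
        _ ≤ |Ax t| * sigmaF F (x + y) := mul_le_mul_of_nonneg_left h1 (abs_nonneg _)
    have hgint_t : Integrable (fun t => g (t, y)) (volume.restrict (Set.Ioi x)) := by
      refine Integrable.mono (hAxint.abs.mul_const (sigmaF F (x + y))) ?_ ?_
      · refine ((hAx_aesm.mul
          ((hFmeas.comp (measurable_add_const y)).aestronglyMeasurable)).norm).congr
          (Filter.Eventually.of_forall fun t => ?_)
        simp [hg_def, Real.norm_eq_abs, abs_mul]
      refine (ae_restrict_iff' measurableSet_Ioi).2 (Filter.Eventually.of_forall ?_)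
      intro t ht
      have := hpt t ht
      simp only [hg_def, Real.norm_eq_abs, abs_abs] at this ⊢
      exact this.trans (le_abs_self _)
    calc (∫ t in Set.Ioi x, g (t, y))
        ≤ ∫ t in Set.Ioi x, |Ax t| * sigmaF F (x + y) :=
          setIntegral_mono_on hgint_t (hAxint.abs.mul_const _) measurableSet_Ioi hpt
      _ = (∫ t in Set.Ioi x, |Ax t|) * sigmaF F (x + y) := integral_mul_const _ _
  -- measurability and integrability of the inner integral as a function of `y`
  have hJ_aesm : AEStronglyMeasurable (fun y => ∫ t in Set.Ioi x, g (t, y))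
      (volume.restrict (Set.Ioi x)) := by
    have hswap_aesm : AEStronglyMeasurable (fun p : ℝ × ℝ => g (p.2, p.1))
        ((volume.restrict (Set.Ioi x)).prod (volume.restrict (Set.Ioi x))) := by
      have h1 : AEStronglyMeasurable (fun p : ℝ × ℝ => Ax p.2)
          ((volume.restrict (Set.Ioi x)).prod (volume.restrict (Set.Ioi x))) :=
        hAx_aesm.comp_quasiMeasurePreserving Measure.quasiMeasurePreserving_snd
      have h2 : AEStronglyMeasurable (fun p : ℝ × ℝ => F (p.2 + p.1))
          ((volume.restrict (Set.Ioi x)).prod (volume.restrict (Set.Ioi x))) :=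
        (hFmeas.comp (measurable_snd.add measurable_fst)).aestronglyMeasurable
      exact (h1.mul h2).norm.congr
        (Filter.Eventually.of_forall fun p => by simp [hg_def, Real.norm_eq_abs, abs_mul])
    exact hswap_aesm.integral_prod_right'
  have hσLint : IntegrableOn (fun y => sigmaF F (x + y)) (Set.Ioi x) :=
    cov_integrableOn (sigmaF F) x x (by rw [← two_mul]; exact hσint)
  have hJ_int : Integrable (fun y => ∫ t in Set.Ioi x, g (t, y))
      (volume.restrict (Set.Ioi x)) := by
    refine Integrable.mono (hσLint.const_mul (∫ t in Set.Ioi x, |Ax t|)) hJ_aesm ?_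
    refine (ae_restrict_iff' measurableSet_Ioi).2 (Filter.Eventually.of_forall ?_)
    intro y hy
    rw [Real.norm_eq_abs, Real.norm_eq_abs, abs_of_nonneg (hJ_nonneg y)]
    exact (hJ_le y hy).trans (le_abs_self _)
  -- the double integral is at most `δ ∫ |Ax|`
  have hJsum : (∫ y in Set.Ioi x, ∫ t in Set.Ioi x, g (t, y))
      ≤ δ * ∫ t in Set.Ioi x, |Ax t| := by
    rw [← hswap]
    calc (∫ t in Set.Ioi x, ∫ y in Set.Ioi x, g (t, y))
        ≤ ∫ t in Set.Ioi x, |Ax t| * δ := by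
          refine setIntegral_mono_on hmarg_int (hAxint.abs.mul_const δ)
            measurableSet_Ioi ?_
          intro t ht
          exact hslice_val t ht.le
      _ = (∫ t in Set.Ioi x, |Ax t|) * δ := integral_mul_const _ _
      _ = δ * ∫ t in Set.Ioi x, |Ax t| := mul_comm _ _
  -- pointwise bound on |Ax| from the differentiated Marchenko equation
  have hpt_main : ∀ y ∈ Set.Ioi x,
      |Ax y| ≤ |A x| * |F (x + y)| + |F' (x + y)| + ∫ t in Set.Ioi x, g (t, y) := by
    intro y hy
    have hy' : x ≤ y := le_of_lt hy
    have h := heq' y hy'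
    have h2 : |∫ t in Set.Ioi x, Ax t * F (t + y)| ≤ ∫ t in Set.Ioi x, g (t, y) := by
      have hni := norm_integral_le_integral_norm (μ := volume.restrict (Set.Ioi x))
        (fun t => Ax t * F (t + y))
      simp only [Real.norm_eq_abs] at hni
      simp only [hg_def]
      exact hni
    have hAxy : Ax y
        = A x * F (x + y) - F' (x + y) - ∫ t in Set.Ioi x, Ax t * F (t + y) := by
      linarith
    rw [hAxy]
    calc |A x * F (x + y) - F' (x + y) - ∫ t in Set.Ioi x, Ax t * F (t + y)|
        ≤ |A x * F (x + y) - F' (x + y)|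
          + |∫ t in Set.Ioi x, Ax t * F (t + y)| := abs_sub _ _
      _ ≤ (|A x * F (x + y)| + |F' (x + y)|) + ∫ t in Set.Ioi x, g (t, y) :=
          add_le_add (abs_sub _ _) h2
      _ = |A x| * |F (x + y)| + |F' (x + y)| + ∫ t in Set.Ioi x, g (t, y) := by
          rw [abs_mul]
  -- integrate the pointwise bound
  have hint1 : IntegrableOn (fun y => |F (x + y)|) (Set.Ioi x) := (key2L x le_rfl).1
  have hint1' : Integrable (fun y => |A x| * |F (x + y)|)
      (volume.restrict (Set.Ioi x)) := hint1.const_mul _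
  have hint2 : IntegrableOn (fun y => |F' (x + y)|) (Set.Ioi x) :=
    cov_integrableOn (fun v => |F' v|) x x
      (hF'int.mono_set (Set.Ioi_subset_Ioi (by linarith)))
  have hmain : (∫ y in Set.Ioi x, |Ax y|)
      ≤ |A x| * (∫ y in Set.Ioi x, |F (x + y)|) + (∫ y in Set.Ioi x, |F' (x + y)|)
        + ∫ y in Set.Ioi x, ∫ t in Set.Ioi x, g (t, y) := by
    have hsum : Integrable
        (fun y => |A x| * |F (x + y)| + |F' (x + y)| + ∫ t in Set.Ioi x, g (t, y))
        (volume.restrict (Set.Ioi x)) := (hint1'.add hint2).add hJ_int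
    have hint12 : Integrable (fun y => |A x| * |F (x + y)| + |F' (x + y)|)
        (volume.restrict (Set.Ioi x)) := hint1'.add hint2
    have h1 : (∫ y in Set.Ioi x, |Ax y|)
        ≤ ∫ y in Set.Ioi x,
            (|A x| * |F (x + y)| + |F' (x + y)| + ∫ t in Set.Ioi x, g (t, y)) :=
      integral_mono_ae hAxint.abs hsum
        ((ae_restrict_iff' measurableSet_Ioi).2 (Filter.Eventually.of_forall hpt_main))
    rw [integral_add hint12 hJ_int, integral_add hint1' hint2,
      integral_const_mul] at h1
    exact h1
  -- final bookkeeping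
  have hT1 : (∫ y in Set.Ioi x, |F (x + y)|) ≤ ∫ y in Set.Ioi (2 * x), sigmaF F y := by
    have hcov : (∫ y in Set.Ioi x, |F (x + y)|) = ∫ v in Set.Ioi (x + x), |F v| :=
      cov_integral (fun v => |F v|) x x
    rw [hcov]
    exact (key1 (x + x) (by linarith)).2
  have hT1nonneg : 0 ≤ ∫ y in Set.Ioi x, |F (x + y)| :=
    setIntegral_nonneg measurableSet_Ioi fun _ _ => abs_nonneg _
  have hT2 : (∫ y in Set.Ioi x, |F' (x + y)|) = ∫ v in Set.Ioi (2 * x), |F' v| := by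
    have hcov : (∫ y in Set.Ioi x, |F' (x + y)|) = ∫ v in Set.Ioi (x + x), |F' v| :=
      cov_integral (fun v => |F' v|) x x
    rw [hcov, ← two_mul]
  have hAxle : |A x| ≤ (1 - δ)⁻¹ * sigmaF F (2 * x) := (hMA x le_rfl).trans hMA_final
  have h5 : |A x| * (∫ y in Set.Ioi x, |F (x + y)|)
      ≤ (1 - δ)⁻¹ * sigmaF F (2 * x) * (∫ y in Set.Ioi (2 * x), sigmaF F y) :=
    mul_le_mul hAxle hT1 hT1nonneg (by positivity)
  set Iv := ∫ y in Set.Ioi x, |Ax y| with hIv_def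
  have h6 : Iv ≤ |A x| * (∫ y in Set.Ioi x, |F (x + y)|)
      + (∫ y in Set.Ioi x, |F' (x + y)|) + δ * Iv := by
    linarith [hmain, hJsum]
  rw [hT2] at h6
  rw [inv_mul_eq_div, le_div_iff₀ hD]
  nlinarith [h5, h6]
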